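/- If A is a bounded normal operator on a complex Hilbert space H and X is a bounded operator on H such that the s-fold iterated commutator ad_A^s(X) = 0 for some positive integer s, then AX = XA. -/

import Mathlib

open NormedSpace Bornology Set Function

section Cstar
variable {𝔸 : Type*} [NormedRing 𝔸] [StarRing 𝔸] [CStarRing 𝔸]
  [NormedAlgebra ℂ 𝔸] [CompleteSpace 𝔸] [StarModule ℂ 𝔸]

/-- Fuglede's theorem. -/
theorem my_fuglede {A Y : 𝔸} (hA : A * star A = star A * A)
    (hY : A * Y = Y * A) : star A * Y = Y * star A := by
  let +nondep : NormedAlgebra ℚ 𝔸 := .restrictScalars ℚ ℂ 𝔸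
  set F : ℂ → 𝔸 := fun z => exp (z • star A) * Y * exp (z • (-star A)) with hF
  have hdiff : Differentiable ℂ F := fun z =>
    (((hasDerivAt_exp_smul_const (𝕂 := ℂ) (star A) z).mul_const Y).mul
      (hasDerivAt_exp_smul_const (𝕂 := ℂ) (-star A) z)).differentiableAt
  have hbound : ∀ z, ‖F z‖ = ‖Y‖ := by
    intro z
    set S : 𝔸 := z • star A - (starRingEnd ℂ z) • A with hS
    have hstarS : star S = -S := by
      simp [hS, star_smul, star_star, sub_eq_add_neg, add_comm]
    have hcomm0 : Commute (star A) A := hA.symm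
    have h1 : Commute (star A) A := hA.symm
    have hScomm : Commute S ((starRingEnd ℂ z) • A) :=
      ((h1.smul_left z).smul_right _).sub_left (Commute.refl _)
    have hsplit : exp (z • star A) = exp S * exp ((starRingEnd ℂ z) • A) := by
      rw [← exp_add_of_commute hScomm, hS, sub_add_cancel]
    have hScomm' : Commute (-((starRingEnd ℂ z) • A)) (-S) := (hScomm.neg_left).neg_right.symm
    have hsplit' : exp (z • (-star A)) =
        exp (-((starRingEnd ℂ z) • A)) * exp (-S) := by
      rw [← exp_add_of_commute hScomm']
      congr 1
      rw [hS]
      module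
    have hUY : exp ((starRingEnd ℂ z) • A) * Y = Y * exp ((starRingEnd ℂ z) • A) :=
      ((Commute.smul_left (hY : Commute A Y) _).exp_left)
    have hexpinv : exp ((starRingEnd ℂ z) • A) * exp (-((starRingEnd ℂ z) • A)) = 1 := by
      rw [← exp_add_of_commute (Commute.neg_right (Commute.refl _)), add_neg_cancel, exp_zero]
    have hstarexp : star (exp S) = exp (-S) := by rw [star_exp, hstarS]
    have hstarexp' : star (exp (-S)) = exp S := by
      rw [star_exp, star_neg, hstarS, neg_neg]
    have hunit : exp S ∈ unitary 𝔸 := by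
      constructor
      · rw [hstarexp, ← exp_add_of_commute (Commute.neg_left (Commute.refl _)),
          neg_add_cancel, exp_zero]
      · rw [hstarexp, ← exp_add_of_commute (Commute.neg_right (Commute.refl _)),
          add_neg_cancel, exp_zero]
    have hunit' : exp (-S) ∈ unitary 𝔸 := by
      constructor
      · rw [hstarexp', ← exp_add_of_commute (Commute.neg_right (Commute.refl _)),
          add_neg_cancel, exp_zero]
      · rw [hstarexp', ← exp_add_of_commute (Commute.neg_left (Commute.refl _)),
          neg_add_cancel, exp_zero]
    have hmid : exp ((starRingEnd ℂ z) • A) * Y * exp (-((starRingEnd ℂ z) • A)) = Y := by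
      rw [hUY, mul_assoc, hexpinv, mul_one]
    have hFz : F z = exp S * (Y * exp (-S)) := by
      show exp (z • star A) * Y * exp (z • -star A) = _
      rw [hsplit, hsplit']
      calc exp S * exp ((starRingEnd ℂ z) • A) * Y *
            (exp (-((starRingEnd ℂ z) • A)) * exp (-S))
          = exp S * (exp ((starRingEnd ℂ z) • A) * Y * exp (-((starRingEnd ℂ z) • A))) *
            exp (-S) := by simp only [mul_assoc]
        _ = exp S * (Y * exp (-S)) := by rw [hmid, mul_assoc]
    rw [hFz, CStarRing.norm_mem_unitary_mul _ hunit, CStarRing.norm_mul_mem_unitary _ hunit']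
  obtain ⟨c, hc⟩ := hdiff.exists_const_forall_eq_of_bounded
    (isBounded_iff_forall_norm_le.mpr ⟨‖Y‖, by rintro x ⟨z, rfl⟩; exact (hbound z).le⟩)
  have hconst : F = fun _ => c := funext hc
  have hder : HasDerivAt F (star A * Y + Y * (-star A)) 0 := by
    have h := ((hasDerivAt_exp_smul_const (𝕂 := ℂ) (star A) 0).mul_const Y).mul
      (hasDerivAt_exp_smul_const (𝕂 := ℂ) (-star A) 0)
    simp only [zero_smul, exp_zero, one_mul, mul_one] at h
    exact h
  have hder0 : HasDerivAt F 0 0 := by rw [hconst]; exact hasDerivAt_const _ _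
  have := hder.unique hder0
  rw [mul_neg, add_neg_eq_zero] at this
  exact this

omit [CompleteSpace 𝔸] [StarModule ℂ 𝔸] in
/-- Kleinecke–Shirokov style vanishing. -/
theorem my_ks {A W T : 𝔸} (hsa : IsSelfAdjoint T) (hT : T = A * W - W * A)
    (hcomm : A * T = T * A) : T = 0 := by
  set d : 𝔸 → 𝔸 := fun u => A * u - u * A with hd
  have hdadd : ∀ u v, d (u + v) = d u + d v := by intro u v; simp only [hd]; noncomm_ring
  have hdmul : ∀ u v, d (u * v) = d u * v + u * d v := by intro u v; simp only [hd]; noncomm_ring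
  have hdT : d T = 0 := by simp [hd, hcomm]
  have hdW : d W = T := by rw [hd]; simp only; rw [← hT]
  have hiadd : ∀ m u v, d^[m] (u + v) = d^[m] u + d^[m] v := by
    intro m
    induction m with
    | zero => intro u v; rfl
    | succ m ih =>
      intro u v
      rw [iterate_succ_apply, hdadd, ih, ← iterate_succ_apply, ← iterate_succ_apply]
  have hiT : ∀ m u, d^[m] (T * u) = T * d^[m] u := by
    intro m
    induction m with
    | zero => intro u; rfl
    | succ m ih =>
      intro u
      rw [iterate_succ_apply, hdmul, hdT, zero_mul, zero_add, ih, iterate_succ_apply]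
  have hiW : ∀ m v, d^[m + 1] (W * v) = W * d^[m + 1] v + (m + 1) • (T * d^[m] v) := by
    intro m
    induction m with
    | zero => intro v; simp [hdmul, hdW, add_comm]
    | succ m ih =>
      intro v
      rw [iterate_succ_apply d (m + 1) (W * v), hdmul, hdW, hiadd, hiT, ih (d v)]
      have e1 : d^[m + 1] (d v) = d^[m + 1 + 1] v := (iterate_succ_apply d (m + 1) v).symm
      have e2 : d^[m] (d v) = d^[m + 1] v := (iterate_succ_apply d m v).symm
      have e3 : (m + 1 + 1) • (T * d^[m + 1] v)
          = (m + 1) • (T * d^[m + 1] v) + T * d^[m + 1] v := succ_nsmul _ _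
      rw [e1, e2, e3]
      abel
  have key : ∀ n, d^[n] (W ^ n) = Nat.factorial n • T ^ n ∧ d^[n + 1] (W ^ n) = 0 := by
    intro n
    induction n with
    | zero => constructor <;> simp [hd]
    | succ n ih =>
      have hw : W ^ (n + 1) = W * W ^ n := by rw [pow_succ']
      constructor
      · rw [hw, hiW, ih.2, ih.1, mul_zero, zero_add, mul_smul_comm, ← pow_succ',
          smul_smul, ← Nat.factorial_succ]
      · rw [hw, hiW, iterate_succ_apply' d (n + 1), ih.2]
        simp [hd]
  have hnorm : ∀ u, ‖d u‖ ≤ 2 * ‖A‖ * ‖u‖ := by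
    intro u
    calc ‖A * u - u * A‖ ≤ ‖A * u‖ + ‖u * A‖ := norm_sub_le _ _
      _ ≤ ‖A‖ * ‖u‖ + ‖u‖ * ‖A‖ := add_le_add (norm_mul_le _ _) (norm_mul_le _ _)
      _ = 2 * ‖A‖ * ‖u‖ := by ring
  have hiter : ∀ n u, ‖d^[n] u‖ ≤ (2 * ‖A‖) ^ n * ‖u‖ := by
    intro n
    induction n with
    | zero => intro u; simp
    | succ n ih =>
      intro u
      calc ‖d^[n + 1] u‖ = ‖d^[n] (d u)‖ := by rw [iterate_succ_apply]
        _ ≤ (2 * ‖A‖) ^ n * ‖d u‖ := ih _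
        _ ≤ (2 * ‖A‖) ^ n * (2 * ‖A‖ * ‖u‖) := by
            exact mul_le_mul_of_nonneg_left (hnorm u)
              (pow_nonneg (by positivity) n)
        _ = (2 * ‖A‖) ^ (n + 1) * ‖u‖ := by ring
  set C : ℝ := 2 * ‖A‖ * ‖W‖ with hC
  have hCnn : 0 ≤ C := by positivity
  
  have hbound : ∀ n, 0 < n → (Nat.factorial n : ℝ) * ‖T ^ n‖ ≤ C ^ n := by
    intro n hn
    have h1 : ‖(Nat.factorial n • T ^ n : 𝔸)‖ = (Nat.factorial n : ℝ) * ‖T ^ n‖ := by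
      rw [← Nat.cast_smul_eq_nsmul ℂ, norm_smul]
      simp
    calc (Nat.factorial n : ℝ) * ‖T ^ n‖ = ‖(Nat.factorial n • T ^ n : 𝔸)‖ := h1.symm
      _ = ‖d^[n] (W ^ n)‖ := by rw [(key n).1]
      _ ≤ (2 * ‖A‖) ^ n * ‖W ^ n‖ := hiter n _
      _ ≤ (2 * ‖A‖) ^ n * ‖W‖ ^ n := by
          exact mul_le_mul_of_nonneg_left (norm_pow_le' _ hn)
            (pow_nonneg (by positivity) n)
      _ = C ^ n := by rw [hC]; ring
  have hpow : ∀ k : ℕ, ‖T ^ 2 ^ k‖ = ‖T‖ ^ 2 ^ k := by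
    intro k
    have h := hsa.nnnorm_pow_two_pow k
    rw [← coe_nnnorm, h, NNReal.coe_pow, coe_nnnorm]
  by_contra hTne
  have ht : 0 < ‖T‖ := norm_pos_iff.mpr hTne
  have hTC : ‖T‖ ≤ C := by
    have hb := hbound 1 one_pos
    simpa using hb
  have hC0 : 0 < C := lt_of_lt_of_le ht hTC
  have hfact : ∀ k : ℕ, (1 : ℝ) ≤ (C / ‖T‖) ^ 2 ^ k / Nat.factorial (2 ^ k) := by
    intro k
    have h := hbound (2 ^ k) (Nat.pow_pos (n := k) two_pos)
    rw [hpow k] at h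
    have htpow : 0 < ‖T‖ ^ 2 ^ k := pow_pos ht _
    have hfp : (0 : ℝ) < (Nat.factorial (2 ^ k) : ℝ) := by exact_mod_cast Nat.factorial_pos _
    rw [le_div_iff₀ hfp, one_mul, div_pow, le_div_iff₀ htpow]
    exact h
  have htend := FloorSemiring.tendsto_pow_div_factorial_atTop (K := ℝ) (C / ‖T‖)
  obtain ⟨N, hN⟩ := (Filter.tendsto_atTop'.mp htend) (Set.Iio 1) (Iio_mem_nhds one_pos)
  have h2N : N ≤ 2 ^ N := (Nat.lt_two_pow_self (n := N)).le
  have := hN (2 ^ N) h2N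
  simp only [Set.mem_Iio] at this
  linarith [hfact N]

/-- The core step: for normal `A`, `ad_A^2 X = 0` implies `ad_A X = 0`. -/
theorem my_core {A X : 𝔸} (hA : A * star A = star A * A)
    (h2 : A * (A * X - X * A) = (A * X - X * A) * A) : A * X = X * A := by
  set Y : 𝔸 := A * X - X * A with hYdef
  have hfug : star A * Y = Y * star A := my_fuglede hA h2
  have hstarY : star Y * A = A * star Y := by
    have := congrArg star hfug
    rwa [star_mul, star_mul, star_star] at this
  have hsa : IsSelfAdjoint (star Y * Y) := by
    rw [IsSelfAdjoint, star_mul, star_star]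
  have hcomm : A * (star Y * Y) = (star Y * Y) * A := by
    calc A * (star Y * Y) = (A * star Y) * Y := by rw [mul_assoc]
      _ = (star Y * A) * Y := by rw [hstarY]
      _ = star Y * (A * Y) := by rw [mul_assoc]
      _ = star Y * (Y * A) := by rw [h2]
      _ = (star Y * Y) * A := by rw [mul_assoc]
  have hT : star Y * Y = A * (star Y * X) - (star Y * X) * A := by
    calc star Y * Y = star Y * (A * X) - star Y * (X * A) := by rw [hYdef, mul_sub]
      _ = (star Y * A) * X - (star Y * X) * A := by rw [← mul_assoc, ← mul_assoc]
      _ = (A * star Y) * X - (star Y * X) * A := by rw [hstarY]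
      _ = A * (star Y * X) - (star Y * X) * A := by rw [mul_assoc]
  have hzero : star Y * Y = 0 := my_ks hsa hT hcomm
  have hY0 : Y = 0 := (CStarRing.star_mul_self_eq_zero_iff Y).mp hzero
  exact sub_eq_zero.mp hY0
end Cstar

theorem stmt0 {H : Type*} [NormedAddCommGroup H] [InnerProductSpace ℂ H]
    [CompleteSpace H] (A X : H →L[ℂ] H) (hA : A * star A = star A * A)
    (s : ℕ) (hs : 0 < s)
    (h : (fun Y => A * Y - Y * A)^[s] X = 0) : A * X = X * A := by
  set d : (H →L[ℂ] H) → (H →L[ℂ] H) := fun Y => A * Y - Y * A with hd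
  have key : ∀ n, d^[n + 1] X = 0 → d X = 0 := by
    intro n
    induction n with
    | zero => exact fun h => h
    | succ n ih =>
      intro h1
      apply ih
      have h2 : d (d (d^[n] X)) = 0 := by
        rw [← Function.iterate_succ_apply' d n X, ← Function.iterate_succ_apply' d (n + 1) X]
        exact h1
      have : A * (d^[n] X) = (d^[n] X) * A := by
        apply my_core hA
        have := h2
        simp only [hd] at this ⊢
        exact sub_eq_zero.mp this
      rw [Function.iterate_succ_apply' d n X]
      simp only [hd]
      rw [this, sub_self]
  obtain ⟨s', rfl⟩ : ∃ s', s = s' + 1 := ⟨s - 1, (Nat.succ_pred_eq_of_pos hs).symm⟩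
  have := key s' h
  simp only [hd] at this
  exact sub_eq_zero.mp this
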